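/- Halving of cleared DER supply due to aggregation (consequence of Proposition 2): let κ > γ ≥ 0, λ_RT > 0, σ > 0, μ ≥ √3·σ and N ≥ 1. The total DER quantity cleared in the wholesale market with the profit-maximizing aggregator, q*_A = (N/2)·(μ − √3·σ + (2√3·σ/λ_RT)·(κ − γ)), equals exactly half of the total DER quantity cleared under direct prosumer participation, N·q* with q* = μ − √3·σ + (2√3·σ/λ_RT)·(κ − γ); i.e., q*_A = N·q*/2. -/

import Mathlib

open Real

/-- Halving of cleared DER supply due to aggregation (consequence of
Proposition 2): the total DER quantity `q*_A` cleared with the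
profit-maximizing aggregator (the minimizer over `[0, ∞)` of the dispatch cost
`f_A`) equals exactly half of the total quantity `N q*` cleared under direct
participation (`q*` being the minimizer over `[0, ∞)` of the per-prosumer
dispatch cost `f_P`): `q*_A = N q*/2`, with
`q* = μ - √3 σ + (2 √3 σ/λ_RT)(κ - γ)`. -/
theorem halving_of_cleared_supply (κ γ lamRT σ μ N D : ℝ)
    (hκγ : γ < κ) (hγ : 0 ≤ γ) (hRT : 0 < lamRT) (hσ : 0 < σ)
    (hμ : Real.sqrt 3 * σ ≤ μ) (hN : 1 ≤ N)
    (qA q : ℝ) (hqA : qA ∈ Set.Ici (0 : ℝ)) (hq : q ∈ Set.Ici (0 : ℝ))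
    (hminA : IsMinOn (fun q' => κ * D + lamRT * q' ^ 2 / (2 * N * Real.sqrt 3 * σ)
      + (γ - κ - (μ - Real.sqrt 3 * σ) * lamRT / (2 * Real.sqrt 3 * σ)) * q')
      (Set.Ici 0) qA)
    (hminP : IsMinOn (fun q' => κ * D + N * lamRT * q' ^ 2 / (4 * Real.sqrt 3 * σ)
      + (γ - κ - (μ - Real.sqrt 3 * σ) * lamRT / (2 * Real.sqrt 3 * σ)) * N * q')
      (Set.Ici 0) q) :
    q = μ - Real.sqrt 3 * σ + (2 * Real.sqrt 3 * σ / lamRT) * (κ - γ) ∧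
    qA = N * q / 2 := by
  have h3 : (0:ℝ) < Real.sqrt 3 := Real.sqrt_pos.mpr (by norm_num)
  have h3ne : Real.sqrt 3 ≠ 0 := ne_of_gt h3
  have hσne : σ ≠ 0 := ne_of_gt hσ
  have hRTne : lamRT ≠ 0 := ne_of_gt hRT
  have hN0 : (0:ℝ) < N := by linarith
  have hNne : N ≠ 0 := ne_of_gt hN0
  obtain ⟨v, hv⟩ : ∃ v : ℝ, v = μ - Real.sqrt 3 * σ + (2 * Real.sqrt 3 * σ / lamRT) * (κ - γ) :=
    ⟨_, rfl⟩
  have hv0 : 0 ≤ v := by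
    have h1 : (0:ℝ) ≤ μ - Real.sqrt 3 * σ := by linarith
    have h2 : (0:ℝ) ≤ (2 * Real.sqrt 3 * σ / lamRT) * (κ - γ) := by
      apply mul_nonneg
      · positivity
      · linarith
    rw [hv]; linarith
  -- direct participation part
  have hAP : (0:ℝ) < N * lamRT / (4 * Real.sqrt 3 * σ) := by positivity
  have hbP : (γ - κ - (μ - Real.sqrt 3 * σ) * lamRT / (2 * Real.sqrt 3 * σ)) * N
      = - (2 * (N * lamRT / (4 * Real.sqrt 3 * σ)) * v) := by
    rw [hv]; field_simp; ring
  have hP := isMinOn_iff.mp hminP v (Set.mem_Ici.mpr hv0)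
  have hPk : N * lamRT / (4 * Real.sqrt 3 * σ) * (q - v) ^ 2 ≤ 0 := by
    have e1 : N * lamRT * q ^ 2 / (4 * Real.sqrt 3 * σ)
        = N * lamRT / (4 * Real.sqrt 3 * σ) * q ^ 2 := by ring
    have e2 : N * lamRT * v ^ 2 / (4 * Real.sqrt 3 * σ)
        = N * lamRT / (4 * Real.sqrt 3 * σ) * v ^ 2 := by ring
    rw [e1, e2, hbP] at hP
    nlinarith [hP]
  have hqv : q = v := by
    have h2 : (q - v) ^ 2 ≤ 0 := by
      by_contra hcon; push_neg at hcon
      linarith [hPk, mul_pos hAP hcon]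
    have h0 : q - v = 0 := by
      have := le_antisymm h2 (sq_nonneg (q - v))
      exact pow_eq_zero_iff (by norm_num) |>.mp this
    linarith
  refine ⟨hqv.trans hv, ?_⟩
  -- aggregator part
  obtain ⟨w, hw⟩ : ∃ w : ℝ, w = N * v / 2 := ⟨_, rfl⟩
  have hvA0 : 0 ≤ w := by rw [hw]; positivity
  have hAA : (0:ℝ) < lamRT / (2 * N * Real.sqrt 3 * σ) := by positivity
  have hbA : (γ - κ - (μ - Real.sqrt 3 * σ) * lamRT / (2 * Real.sqrt 3 * σ))
      = - (2 * (lamRT / (2 * N * Real.sqrt 3 * σ)) * w) := by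
    rw [hw, hv]; field_simp; ring
  have hA := isMinOn_iff.mp hminA w (Set.mem_Ici.mpr hvA0)
  have hAk : lamRT / (2 * N * Real.sqrt 3 * σ) * (qA - w) ^ 2 ≤ 0 := by
    have e1 : lamRT * qA ^ 2 / (2 * N * Real.sqrt 3 * σ)
        = lamRT / (2 * N * Real.sqrt 3 * σ) * qA ^ 2 := by ring
    have e2 : lamRT * w ^ 2 / (2 * N * Real.sqrt 3 * σ)
        = lamRT / (2 * N * Real.sqrt 3 * σ) * w ^ 2 := by ring
    rw [e1, e2, hbA] at hA
    nlinarith [hA]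
  have h2 : (qA - w) ^ 2 ≤ 0 := by
    by_contra hcon; push_neg at hcon
    linarith [hAk, mul_pos hAA hcon]
  have h0 : qA - w = 0 := by
    have := le_antisymm h2 (sq_nonneg (qA - w))
    exact pow_eq_zero_iff (by norm_num) |>.mp this
  rw [hqv]; rw [hw] at h0; linarith
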